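/- Let α, β be positive real affine roots with ℓ(s_α)=2ht(α∨)−1 and ℓ(s_β)=2ht(β∨)−1, ℓ(s_α s_β) = ℓ(s_α) + ℓ(s_β), and let γ be a positive real root with γ∨ = α∨ + β∨. Then ℓ(s_γ) = 2ht(γ∨) − 1 if and only if ⟨α, β∨⟩ ≠ 0. -/

import Mathlib

/-- Elements of the affine root lattice (resp. affine coroot lattice) of the affine
(untwisted) Kac–Moody root system, written in coordinates with respect to the simple
roots `α_0, …, α_n` (resp. the simple coroots `α_0∨, …, α_n∨`).  The dominance
(partial) order `a ≤ b` (meaning `b - a` is a nonnegative combination of the simple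
roots/coroots) is the coordinatewise order. -/
abbrev AffLat (n : ℕ) := Fin (n + 1) → ℤ

/-- The `i`-th simple root (resp. simple coroot) as a coordinate vector. -/
def simpleVec {n : ℕ} (i : Fin (n + 1)) : AffLat n := Pi.single i 1

/-- The height of a root (resp. coroot): the sum of its coordinates in the basis of
simple roots (resp. simple coroots). -/
def htv {n : ℕ} (a : AffLat n) : ℤ := ∑ j, a j

/-- `a` is a simple root (a standard basis vector). -/
def IsSimpleVec {n : ℕ} (a : AffLat n) : Prop := ∃ i, a = simpleVec i

/-- Axiomatization of the affine (untwisted) Kac–Moody root system attached to a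
finite simple Lie algebra, together with its affine Weyl group `W` (a Coxeter group
with simple reflections `s_0, …, s_n`), its action on the root and coroot lattices,
the coroot map `α ↦ α∨` on real roots, the reflection map `α ↦ s_α`, and the
imaginary coroot `c = α_0∨ + θ∨`. -/
structure AffineRootSystem (n : ℕ) (W : Type*) [Group W] where
  /-- the affine Cartan matrix: `cartan i j = ⟨α_j, α_i∨⟩` -/
  cartan : Fin (n + 1) → Fin (n + 1) → ℤ
  cartan_diag : ∀ i, cartan i i = 2
  cartan_offdiag : ∀ i j, i ≠ j → cartan i j ≤ 0
  cartan_symm_zero : ∀ i j, cartan i j = 0 → cartan j i = 0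
  /-- the Coxeter matrix of the affine Weyl group -/
  M : CoxeterMatrix (Fin (n + 1))
  /-- the affine Weyl group, as a Coxeter system with simple reflections
  `cs.simple 0, …, cs.simple n` and Coxeter length `cs.length` -/
  cs : CoxeterSystem M W
  /-- the action of the affine Weyl group on the root lattice -/
  actR : W → AffLat n → AffLat n
  actR_one : ∀ a, actR 1 a = a
  actR_mul : ∀ u v a, actR (u * v) a = actR u (actR v a)
  actR_add : ∀ w a b, actR w (a + b) = actR w a + actR w b
  actR_simple : ∀ i a, actR (cs.simple i) a = a - (∑ k, cartan i k * a k) • simpleVec i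
  /-- the action of the affine Weyl group on the coroot lattice -/
  actC : W → AffLat n → AffLat n
  actC_one : ∀ b, actC 1 b = b
  actC_mul : ∀ u v b, actC (u * v) b = actC u (actC v b)
  actC_add : ∀ w a b, actC w (a + b) = actC w a + actC w b
  actC_simple : ∀ i b, actC (cs.simple i) b = b - (∑ k, cartan k i * b k) • simpleVec i
  /-- the coroot `α∨` of a real root `α` -/
  coroot : AffLat n → AffLat n
  coroot_simple : ∀ i, coroot (simpleVec i) = simpleVec i
  coroot_act : ∀ w a, coroot (actR w a) = actC w (coroot a)
  /-- the reflection `s_α ∈ W` of a real root `α` -/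
  refl : AffLat n → W
  refl_simple : ∀ i, refl (simpleVec i) = cs.simple i
  refl_act : ∀ w a, refl (actR w a) = w * refl a * w⁻¹
  /-- the coordinates of the imaginary coroot `c = α_0∨ + θ∨` in the basis of simple
  coroots; thus `imag 0 = 1` and `imag i = m_i` for `i ≥ 1`, where
  `θ∨ = m_1 α_1∨ + ⋯ + m_n α_n∨` -/
  imag : AffLat n
  imag_zero : imag 0 = 1
  imag_pos : ∀ i, 1 ≤ imag i
  imag_invariant : ∀ w, actC w imag = imag
  /-- the standard relation between lengths and positivity of roots:
  `ℓ(w s_α) < ℓ(w)` iff `w(α) < 0` -/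
  length_refl_lt_iff : ∀ a : AffLat n, (∃ w i, a = actR w (simpleVec i)) → 0 ≤ a →
    ∀ w : W, cs.length (w * refl a) < cs.length w ↔ actR w a ≤ 0

namespace AffineRootSystem

variable {n : ℕ} {W : Type*} [Group W] (R : AffineRootSystem n W)

/-- `α` is a positive real root of the affine root system. -/
def IsPosRoot (a : AffLat n) : Prop := (∃ w i, a = R.actR w (simpleVec i)) ∧ 0 ≤ a

/-- The evaluation pairing `⟨α, β∨⟩` of a root `α` (coordinates w.r.t. the simple
roots) against a coroot `β∨` (coordinates w.r.t. the simple coroots), computed via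
the affine Cartan matrix `cartan i k = ⟨α_k, α_i∨⟩`. -/
def pairing (a b : AffLat n) : ℤ := ∑ i, ∑ k, b i * (R.cartan i k * a k)

/-- `α` belongs to the set `Π̃` of positive real roots with `ℓ(s_α) = 2 ht(α∨) - 1`
(the roots appearing in the affine quantum Chevalley formula). -/
def IsChevalleyRoot (a : AffLat n) : Prop :=
  R.IsPosRoot a ∧ (R.cs.length (R.refl a) : ℤ) = 2 * htv (R.coroot a) - 1

end AffineRootSystem
namespace AffineRootSystem

variable {n : ℕ} {W : Type*} [Group W] (R : AffineRootSystem n W)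

/-- `a` is a real root. -/
def IsRealRoot (a : AffLat n) : Prop := ∃ w i, a = R.actR w (simpleVec i)

lemma isRealRoot_simple (i : Fin (n + 1)) : R.IsRealRoot (simpleVec i) :=
  ⟨1, i, (R.actR_one _).symm⟩

lemma isRealRoot_act {a : AffLat n} (h : R.IsRealRoot a) (w : W) :
    R.IsRealRoot (R.actR w a) := by
  obtain ⟨u, i, rfl⟩ := h
  exact ⟨w * u, i, (R.actR_mul w u _).symm⟩

lemma isRealRoot_of_isPosRoot {a : AffLat n} (h : R.IsPosRoot a) : R.IsRealRoot a := h.1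

lemma isPosRoot_simple (i : Fin (n + 1)) : R.IsPosRoot (simpleVec i) := by
  refine ⟨R.isRealRoot_simple i, ?_⟩
  intro j
  simp only [simpleVec, Pi.zero_apply, Pi.single_apply]
  split <;> omega

/-- `actR w` as an additive monoid hom. -/
def actRHom (w : W) : AffLat n →+ AffLat n := AddMonoidHom.mk' (R.actR w) (R.actR_add w)

/-- `actC w` as an additive monoid hom. -/
def actCHom (w : W) : AffLat n →+ AffLat n := AddMonoidHom.mk' (R.actC w) (R.actC_add w)

@[simp] lemma actRHom_apply (w : W) (a : AffLat n) : R.actRHom w a = R.actR w a := rfl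
@[simp] lemma actCHom_apply (w : W) (a : AffLat n) : R.actCHom w a = R.actC w a := rfl

lemma actR_neg (w : W) (a : AffLat n) : R.actR w (-a) = -R.actR w a := by
  simpa using (R.actRHom w).map_neg a

lemma actR_sub (w : W) (a b : AffLat n) : R.actR w (a - b) = R.actR w a - R.actR w b := by
  simpa using (R.actRHom w).map_sub a b

lemma actR_zsmul (w : W) (z : ℤ) (a : AffLat n) : R.actR w (z • a) = z • R.actR w a := by
  simpa using (R.actRHom w).map_zsmul z a

lemma actC_neg (w : W) (a : AffLat n) : R.actC w (-a) = -R.actC w a := by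
  simpa using (R.actCHom w).map_neg a

lemma actC_sub (w : W) (a b : AffLat n) : R.actC w (a - b) = R.actC w a - R.actC w b := by
  simpa using (R.actCHom w).map_sub a b

lemma actC_zsmul (w : W) (z : ℤ) (a : AffLat n) : R.actC w (z • a) = z • R.actC w a := by
  simpa using (R.actCHom w).map_zsmul z a

lemma actR_actR_inv (w : W) (a : AffLat n) : R.actR w⁻¹ (R.actR w a) = a := by
  rw [← R.actR_mul, inv_mul_cancel, R.actR_one]

lemma actR_inv_actR (w : W) (a : AffLat n) : R.actR w (R.actR w⁻¹ a) = a := by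
  rw [← R.actR_mul, mul_inv_cancel, R.actR_one]

/-! ### pairing basics -/

lemma pairing_add_left (a a' b : AffLat n) :
    R.pairing (a + a') b = R.pairing a b + R.pairing a' b := by
  simp [pairing, Pi.add_apply, mul_add, Finset.sum_add_distrib]

lemma pairing_add_right (a b b' : AffLat n) :
    R.pairing a (b + b') = R.pairing a b + R.pairing a b' := by
  simp [pairing, Pi.add_apply, add_mul, Finset.sum_add_distrib]

lemma pairing_smul_left (z : ℤ) (a b : AffLat n) :
    R.pairing (z • a) b = z * R.pairing a b := by
  unfold pairing
  rw [Finset.mul_sum]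
  refine Finset.sum_congr rfl fun i _ => ?_
  rw [Finset.mul_sum]
  refine Finset.sum_congr rfl fun k _ => ?_
  simp only [Pi.smul_apply, smul_eq_mul]
  ring

lemma pairing_smul_right (z : ℤ) (a b : AffLat n) :
    R.pairing a (z • b) = z * R.pairing a b := by
  unfold pairing
  rw [Finset.mul_sum]
  refine Finset.sum_congr rfl fun i _ => ?_
  rw [Finset.mul_sum]
  refine Finset.sum_congr rfl fun k _ => ?_
  simp only [Pi.smul_apply, smul_eq_mul]
  ring

lemma pairing_sub_left (a a' b : AffLat n) :
    R.pairing (a - a') b = R.pairing a b - R.pairing a' b := by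
  have := R.pairing_add_left (a - a') a' b
  simp only [sub_add_cancel] at this
  omega

lemma pairing_sub_right (a b b' : AffLat n) :
    R.pairing a (b - b') = R.pairing a b - R.pairing a b' := by
  have := R.pairing_add_right a (b - b') b'
  simp only [sub_add_cancel] at this
  omega

lemma pairing_zero_left (b : AffLat n) : R.pairing 0 b = 0 := by
  simp [pairing]

lemma pairing_zero_right (a : AffLat n) : R.pairing a 0 = 0 := by
  simp [pairing]

lemma pairing_neg_left (a b : AffLat n) : R.pairing (-a) b = -R.pairing a b := by
  have := R.pairing_sub_left 0 a b
  simpa [R.pairing_zero_left] using this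

lemma pairing_neg_right (a b : AffLat n) : R.pairing a (-b) = -R.pairing a b := by
  have := R.pairing_sub_right a 0 b
  simpa [R.pairing_zero_right] using this

lemma pairing_simpleVec_left (j : Fin (n + 1)) (b : AffLat n) :
    R.pairing (simpleVec j) b = ∑ i, b i * R.cartan i j := by
  unfold pairing
  refine Finset.sum_congr rfl fun i _ => ?_
  rw [Finset.sum_eq_single j]
  · simp [simpleVec]
  · intro k _ hk
    simp [simpleVec, Pi.single_eq_of_ne hk]
  · simp

lemma pairing_simpleVec_right (i : Fin (n + 1)) (a : AffLat n) :
    R.pairing a (simpleVec i) = ∑ k, R.cartan i k * a k := by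
  unfold pairing
  rw [Finset.sum_eq_single i]
  · simp [simpleVec]
  · intro p _ hp
    simp [simpleVec, Pi.single_eq_of_ne hp]
  · simp

lemma pairing_simple_simple (j i : Fin (n + 1)) :
    R.pairing (simpleVec j) (simpleVec i) = R.cartan i j := by
  rw [pairing_simpleVec_right, Finset.sum_eq_single j]
  · simp [simpleVec]
  · intro k _ hk
    simp [simpleVec, Pi.single_eq_of_ne hk]
  · simp

lemma pairing_self_simple (i : Fin (n + 1)) :
    R.pairing (simpleVec i) (simpleVec i) = 2 := by
  rw [pairing_simple_simple, R.cartan_diag]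

lemma pairing_decomp_left (a b : AffLat n) :
    R.pairing a b = ∑ k, a k * R.pairing (simpleVec k) b := by
  calc R.pairing a b = ∑ i, ∑ k, b i * (R.cartan i k * a k) := rfl
    _ = ∑ k, ∑ i, b i * (R.cartan i k * a k) := Finset.sum_comm
    _ = ∑ k, a k * R.pairing (simpleVec k) b := by
        refine Finset.sum_congr rfl fun k _ => ?_
        rw [R.pairing_simpleVec_left, Finset.mul_sum]
        refine Finset.sum_congr rfl fun i _ => ?_
        ring

/-- `actR` of a simple reflection in terms of the pairing. -/
lemma actR_simple' (i : Fin (n + 1)) (a : AffLat n) :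
    R.actR (R.cs.simple i) a = a - R.pairing a (simpleVec i) • simpleVec i := by
  rw [R.actR_simple, R.pairing_simpleVec_right]

/-- `actC` of a simple reflection in terms of the pairing. -/
lemma actC_simple' (i : Fin (n + 1)) (b : AffLat n) :
    R.actC (R.cs.simple i) b = b - R.pairing (simpleVec i) b • simpleVec i := by
  rw [R.actC_simple, R.pairing_simpleVec_left]
  congr 2
  refine Finset.sum_congr rfl fun k _ => mul_comm _ _

/-- invariance of the pairing -/
lemma pairing_act (w : W) (a b : AffLat n) :
    R.pairing (R.actR w a) (R.actC w b) = R.pairing a b := by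
  induction w using R.cs.simple_induction generalizing a b with
  | simple i =>
    rw [R.actR_simple', R.actC_simple', R.pairing_sub_left, R.pairing_sub_right,
      R.pairing_sub_right, R.pairing_smul_left, R.pairing_smul_right, R.pairing_smul_right,
      R.pairing_smul_left, R.pairing_self_simple]
    ring
  | one => rw [R.actR_one, R.actC_one]
  | mul u v hu hv =>
    rw [R.actR_mul, R.actC_mul, hu, hv]

/-! ### real roots and reflections -/

lemma actR_simple_self (i : Fin (n + 1)) :
    R.actR (R.cs.simple i) (simpleVec i) = -simpleVec i := by
  rw [R.actR_simple', R.pairing_self_simple, two_smul]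
  abel

lemma actC_simple_self (i : Fin (n + 1)) :
    R.actC (R.cs.simple i) (simpleVec i) = -simpleVec i := by
  rw [R.actC_simple', R.pairing_self_simple, two_smul]
  abel

lemma refl_isReflection {a : AffLat n} (h : R.IsRealRoot a) :
    R.cs.IsReflection (R.refl a) := by
  obtain ⟨w, i, rfl⟩ := h
  rw [R.refl_act, R.refl_simple]
  exact ⟨w, i, rfl⟩

lemma refl_mul_self {a : AffLat n} (h : R.IsRealRoot a) : R.refl a * R.refl a = 1 :=
  (R.refl_isReflection h).mul_self

lemma refl_inv {a : AffLat n} (h : R.IsRealRoot a) : (R.refl a)⁻¹ = R.refl a :=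
  (R.refl_isReflection h).inv

lemma odd_length_refl {a : AffLat n} (h : R.IsRealRoot a) :
    Odd (R.cs.length (R.refl a)) :=
  (R.refl_isReflection h).odd_length

lemma length_refl_pos {a : AffLat n} (h : R.IsRealRoot a) :
    1 ≤ R.cs.length (R.refl a) := by
  rcases R.odd_length_refl h with ⟨k, hk⟩
  omega

lemma actR_refl_self {a : AffLat n} (h : R.IsRealRoot a) :
    R.actR (R.refl a) a = -a := by
  obtain ⟨w, i, rfl⟩ := h
  rw [R.refl_act, R.refl_simple, R.actR_mul, R.actR_mul, R.actR_actR_inv,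
    R.actR_simple_self, R.actR_neg]

lemma neg_isRealRoot {a : AffLat n} (h : R.IsRealRoot a) : R.IsRealRoot (-a) := by
  have := R.isRealRoot_act h (R.refl a)
  rwa [R.actR_refl_self h] at this

lemma coroot_neg {a : AffLat n} (h : R.IsRealRoot a) : R.coroot (-a) = -R.coroot a := by
  obtain ⟨w, i, rfl⟩ := h
  have h1 : -R.actR w (simpleVec i) = R.actR (w * R.cs.simple i) (simpleVec i) := by
    rw [R.actR_mul, R.actR_simple_self, R.actR_neg]
  rw [h1, R.coroot_act, R.coroot_act, R.coroot_simple, R.actC_mul, R.actC_simple_self,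
    R.actC_neg]

lemma refl_neg {a : AffLat n} (h : R.IsRealRoot a) : R.refl (-a) = R.refl a := by
  obtain ⟨w, i, rfl⟩ := h
  have h1 : -R.actR w (simpleVec i) = R.actR (w * R.cs.simple i) (simpleVec i) := by
    rw [R.actR_mul, R.actR_simple_self, R.actR_neg]
  rw [h1, R.refl_act, R.refl_act, R.refl_simple, mul_inv_rev, R.cs.inv_simple,
    mul_assoc w (R.cs.simple i) (R.cs.simple i), R.cs.simple_mul_simple_self, mul_one,
    ← mul_assoc]

lemma pairing_coroot_self {a : AffLat n} (h : R.IsRealRoot a) :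
    R.pairing a (R.coroot a) = 2 := by
  obtain ⟨w, i, rfl⟩ := h
  rw [R.coroot_act, R.coroot_simple, R.pairing_act, R.pairing_self_simple]

lemma ne_zero_of_isRealRoot {a : AffLat n} (h : R.IsRealRoot a) : a ≠ 0 := by
  intro h0
  have := R.pairing_coroot_self h
  rw [h0, R.pairing_zero_left] at this
  omega

lemma coroot_ne_zero {a : AffLat n} (h : R.IsRealRoot a) : R.coroot a ≠ 0 := by
  intro h0
  have := R.pairing_coroot_self h
  rw [h0, R.pairing_zero_right] at this
  omega

/-- action of a reflection on the root lattice -/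
lemma actR_refl {a : AffLat n} (h : R.IsRealRoot a) (x : AffLat n) :
    R.actR (R.refl a) x = x - R.pairing x (R.coroot a) • a := by
  obtain ⟨w, i, rfl⟩ := h
  have hco : R.coroot (R.actR w (simpleVec i)) = R.actC w (simpleVec i) := by
    rw [R.coroot_act, R.coroot_simple]
  have hp : R.pairing (R.actR w⁻¹ x) (simpleVec i)
      = R.pairing x (R.coroot (R.actR w (simpleVec i))) := by
    rw [hco, ← R.pairing_act w (R.actR w⁻¹ x) (simpleVec i), R.actR_inv_actR]
  rw [R.refl_act, R.refl_simple, R.actR_mul, R.actR_mul, R.actR_simple', hp,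
    R.actR_sub, R.actR_inv_actR, R.actR_zsmul]

/-- action of a reflection on the coroot lattice -/
lemma actC_refl {a : AffLat n} (h : R.IsRealRoot a) (y : AffLat n) :
    R.actC (R.refl a) y = y - R.pairing a y • R.coroot a := by
  obtain ⟨w, i, rfl⟩ := h
  have hco : R.coroot (R.actR w (simpleVec i)) = R.actC w (simpleVec i) := by
    rw [R.coroot_act, R.coroot_simple]
  have hp : R.pairing (simpleVec i) (R.actC w⁻¹ y)
      = R.pairing (R.actR w (simpleVec i)) y := by
    rw [← R.pairing_act w (simpleVec i) (R.actC w⁻¹ y), ← R.actC_mul, mul_inv_cancel,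
      R.actC_one]
  have hinv : R.actC w (R.actC w⁻¹ y) = y := by
    rw [← R.actC_mul, mul_inv_cancel, R.actC_one]
  rw [R.refl_act, R.refl_simple, R.actC_mul, R.actC_mul, R.actC_simple', hp, hco,
    R.actC_sub, hinv, R.actC_zsmul]

/-- every image of a positive real root under the Weyl group is nonnegative or nonpositive -/
lemma total {a : AffLat n} (h : R.IsPosRoot a) (w : W) :
    0 ≤ R.actR w a ∨ R.actR w a ≤ 0 := by
  by_contra hcon
  push_neg at hcon
  obtain ⟨h1, h2⟩ := hcon
  have hiff1 := R.length_refl_lt_iff a h.1 h.2 w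
  have hiff2 := R.length_refl_lt_iff a h.1 h.2 (w * R.refl a)
  rw [mul_assoc, R.refl_mul_self (R.isRealRoot_of_isPosRoot h), mul_one, R.actR_mul,
    R.actR_refl_self (R.isRealRoot_of_isPosRoot h), R.actR_neg] at hiff2
  have hne := (R.refl_isReflection (R.isRealRoot_of_isPosRoot h)).length_mul_left_ne w
  have hA : ¬ R.actR w a ≤ 0 := h2
  have hB : ¬ -R.actR w a ≤ 0 := by
    intro hle
    exact h1 (by simpa using neg_nonpos.mp hle)
  rw [← hiff1] at hA
  rw [← hiff2] at hB
  omega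

/-! ### coordinates -/

lemma simpleVec_same (i : Fin (n + 1)) : simpleVec i i = 1 := by
  simp [simpleVec]

lemma simpleVec_ne {i j : Fin (n + 1)} (h : j ≠ i) : simpleVec i j = 0 := by
  simp [simpleVec, Pi.single_eq_of_ne h]

lemma exists_pos_coord {a : AffLat n} (h0 : 0 ≤ a) (hne : a ≠ 0) :
    ∃ j, 1 ≤ a j := by
  by_contra hcon
  push_neg at hcon
  apply hne
  funext j
  have h1 := hcon j
  have h2 := h0 j
  simp only [Pi.zero_apply] at h2 ⊢
  omega

lemma simple_of_support {a : AffLat n} {i : Fin (n + 1)} (hp : R.IsPosRoot a)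
    (hsupp : ∀ j, j ≠ i → a j = 0) : a = simpleVec i := by
  have hne : a ≠ 0 := R.ne_zero_of_isRealRoot hp.1
  have hai : 1 ≤ a i := by
    by_contra hlt
    push_neg at hlt
    apply hne
    funext j
    have h2 := hp.2 j
    simp only [Pi.zero_apply] at h2 ⊢
    by_cases hj : j = i
    · subst hj; omega
    · exact hsupp j hj
  have ha : a = a i • simpleVec i := by
    funext j
    by_cases hj : j = i
    · subst hj
      simp [simpleVec_same, Pi.smul_apply]
    · simp [simpleVec_ne hj, Pi.smul_apply, hsupp j hj]

  obtain ⟨w, j0, hw⟩ := hp.1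
  have hinv : R.actR w⁻¹ a = simpleVec j0 := by
    rw [hw, R.actR_actR_inv]
  rw [ha, R.actR_zsmul] at hinv
  have h1 : (1 : ℤ) = a i * (R.actR w⁻¹ (simpleVec i)) j0 := by
    have := congrFun hinv j0
    simpa [Pi.smul_apply, simpleVec_same] using this.symm
  have hunit : IsUnit (a i) := ⟨⟨a i, (R.actR w⁻¹ (simpleVec i)) j0, h1.symm, by rw [mul_comm]; exact h1.symm⟩, rfl⟩
  have := Int.isUnit_iff.mp hunit
  have hai1 : a i = 1 := by omega
  rw [ha, hai1, one_smul]

lemma sAeI_nonpos {a : AffLat n} {i : Fin (n + 1)} (hp : R.IsPosRoot a)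
    (hc : 1 ≤ R.pairing (simpleVec i) (R.coroot a)) :
    R.actR (R.refl a) (simpleVec i) ≤ 0 := by
  set c := R.pairing (simpleVec i) (R.coroot a) with hcdef
  have hform : R.actR (R.refl a) (simpleVec i)
      = simpleVec i - c • a := R.actR_refl hp.1 _
  rcases R.total (R.isPosRoot_simple i) (R.refl a) with hpos | hneg
  · exfalso
    rw [hform] at hpos
    have hsupp : ∀ j, j ≠ i → a j = 0 := by
      intro j hj
      have := hpos j
      simp only [Pi.zero_apply, Pi.sub_apply, Pi.smul_apply, smul_eq_mul,
        simpleVec_ne hj, zero_sub] at this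
      have hj2 := hp.2 j
      simp only [Pi.zero_apply] at hj2
      nlinarith
    have hsimple := R.simple_of_support hp hsupp
    have hc2 : c = 2 := by
      rw [hcdef, hsimple, R.coroot_simple, R.pairing_self_simple]
    have := hpos i
    rw [hsimple] at this
    simp only [Pi.zero_apply, Pi.sub_apply, Pi.smul_apply, smul_eq_mul,
      simpleVec_same] at this
    omega
  · exact hneg

lemma descent_of_c {a : AffLat n} {i : Fin (n + 1)} (hp : R.IsPosRoot a)
    (hc : 1 ≤ R.pairing (simpleVec i) (R.coroot a)) :
    R.cs.length (R.refl a * R.cs.simple i) < R.cs.length (R.refl a) := by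
  have h := (R.length_refl_lt_iff (simpleVec i) (R.isRealRoot_simple i)
    (R.isPosRoot_simple i).2 (R.refl a)).mpr (R.sAeI_nonpos hp hc)
  rwa [R.refl_simple] at h

lemma length_simple_mul_refl {t : W} (ht : R.cs.IsReflection t) (i : Fin (n + 1)) :
    R.cs.length (R.cs.simple i * t) = R.cs.length (t * R.cs.simple i) := by
  rw [← R.cs.length_inv (R.cs.simple i * t), mul_inv_rev, ht.inv, R.cs.inv_simple]

/-- the fundamental descent step -/
lemma step_down {a : AffLat n} {i : Fin (n + 1)} (hp : R.IsPosRoot a)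
    (hne : a ≠ simpleVec i) (hc : 1 ≤ R.pairing (simpleVec i) (R.coroot a)) :
    R.IsPosRoot (R.actR (R.cs.simple i) a)
    ∧ R.coroot (R.actR (R.cs.simple i) a)
        = R.coroot a - R.pairing (simpleVec i) (R.coroot a) • simpleVec i
    ∧ R.cs.length (R.refl (R.actR (R.cs.simple i) a)) + 2 = R.cs.length (R.refl a) := by
  set c := R.pairing (simpleVec i) (R.coroot a) with hcdef
  have hreal : R.IsRealRoot (R.actR (R.cs.simple i) a) := R.isRealRoot_act hp.1 _
  have hpos : 0 ≤ R.actR (R.cs.simple i) a := by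
    rcases R.total hp (R.cs.simple i) with h0 | h0
    · exact h0
    · exfalso
      apply hne
      apply R.simple_of_support hp
      intro j hj
      have := h0 j
      rw [R.actR_simple'] at this
      simp only [Pi.zero_apply, Pi.sub_apply, Pi.smul_apply, smul_eq_mul,
        simpleVec_ne hj, mul_zero, sub_zero] at this
      have h2 := hp.2 j
      simp only [Pi.zero_apply] at h2
      omega
  refine ⟨⟨hreal, hpos⟩, ?_, ?_⟩
  · rw [R.coroot_act, R.actC_simple']
  · -- length bookkeeping
    have hrefl' : R.refl (R.actR (R.cs.simple i) a)
        = R.cs.simple i * R.refl a * R.cs.simple i := by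
      rw [R.refl_act, R.cs.inv_simple]
    have hd1 : R.cs.length (R.refl a * R.cs.simple i) < R.cs.length (R.refl a) :=
      R.descent_of_c hp hc
    have hd1' : R.cs.length (R.refl a * R.cs.simple i) + 1 = R.cs.length (R.refl a) := by
      rcases R.cs.length_mul_simple (R.refl a) i with h | h <;> omega
    have hswap : R.cs.length (R.cs.simple i * R.refl a)
        = R.cs.length (R.refl a * R.cs.simple i) :=
      R.length_simple_mul_refl (R.refl_isReflection hp.1) i
    -- second descent
    have hform : R.actR (R.cs.simple i * R.refl a) (simpleVec i)
        = -simpleVec i - c • R.actR (R.cs.simple i) a := by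
      rw [R.actR_mul, R.actR_refl hp.1, ← hcdef, R.actR_sub, R.actR_simple_self,
        R.actR_zsmul]
    have hneg2 : R.actR (R.cs.simple i * R.refl a) (simpleVec i) ≤ 0 := by
      rw [hform]
      intro j
      simp only [Pi.zero_apply, Pi.sub_apply, Pi.neg_apply, Pi.smul_apply, smul_eq_mul]
      have h1 := hpos j
      simp only [Pi.zero_apply] at h1
      have h2 : (0:ℤ) ≤ simpleVec i j := (R.isPosRoot_simple i).2 j
      nlinarith
    have hd2 := (R.length_refl_lt_iff (simpleVec i) (R.isRealRoot_simple i)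
      (R.isPosRoot_simple i).2 (R.cs.simple i * R.refl a)).mpr hneg2
    rw [R.refl_simple] at hd2
    have hd2' : R.cs.length (R.cs.simple i * R.refl a * R.cs.simple i) + 1
        = R.cs.length (R.cs.simple i * R.refl a) := by
      rcases R.cs.length_mul_simple (R.cs.simple i * R.refl a) i with h | h <;> omega
    -- upper bound for the other direction
    have hup : R.cs.length (R.refl a)
        ≤ R.cs.length (R.cs.simple i * R.refl a * R.cs.simple i) + 2 := by
      have h1 : R.refl a = R.cs.simple i * (R.cs.simple i * R.refl a * R.cs.simple i)
          * R.cs.simple i := by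
        rw [← mul_assoc, ← mul_assoc, R.cs.simple_mul_simple_self, one_mul, mul_assoc,
          R.cs.simple_mul_simple_self, mul_one]
      calc R.cs.length (R.refl a)
          = R.cs.length (R.cs.simple i * (R.cs.simple i * R.refl a * R.cs.simple i)
            * R.cs.simple i) := by rw [← h1]
        _ ≤ R.cs.length (R.cs.simple i * (R.cs.simple i * R.refl a * R.cs.simple i))
            + R.cs.length (R.cs.simple i) := R.cs.length_mul_le _ _
        _ ≤ R.cs.length (R.cs.simple i) + R.cs.length (R.cs.simple i * R.refl a
            * R.cs.simple i) + R.cs.length (R.cs.simple i) := by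
              have := R.cs.length_mul_le (R.cs.simple i)
                (R.cs.simple i * R.refl a * R.cs.simple i)
              omega
        _ = R.cs.length (R.cs.simple i * R.refl a * R.cs.simple i) + 2 := by
              rw [R.cs.length_simple]; omega
    rw [hrefl']
    omega

/-! ### htv lemmas -/

lemma htv_add (a b : AffLat n) : htv (a + b) = htv a + htv b := by
  simp [htv, Finset.sum_add_distrib]

lemma htv_sub (a b : AffLat n) : htv (a - b) = htv a - htv b := by
  simp [htv, Finset.sum_sub_distrib]

lemma htv_smul (z : ℤ) (a : AffLat n) : htv (z • a) = z * htv a := by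
  simp [htv, Finset.mul_sum]

lemma htv_simpleVec (i : Fin (n + 1)) : htv (simpleVec i) = 1 := by
  unfold htv
  rw [Finset.sum_eq_single i]
  · exact simpleVec_same i
  · intro j _ hj
    exact simpleVec_ne hj
  · simp

/-! ### symmetry of vanishing of the pairing -/

lemma pairing_sym_zero {a b : AffLat n} (ha : R.IsRealRoot a) (hb : R.IsRealRoot b)
    (h : R.pairing a (R.coroot b) = 0) : R.pairing b (R.coroot a) = 0 := by
  have hfix : R.actR (R.refl b) a = a := by
    rw [R.actR_refl hb, h, zero_smul, sub_zero]
  have h1 := R.refl_act (R.refl b) a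
  rw [hfix, R.refl_inv hb] at h1
  have hcomm : R.refl a * R.refl b = R.refl b * R.refl a := by
    calc R.refl a * R.refl b = R.refl b * R.refl a * R.refl b * R.refl b := by rw [← h1]
      _ = R.refl b * R.refl a := by rw [mul_assoc, R.refl_mul_self hb, mul_one]
  set m := R.pairing b (R.coroot a) with hmdef
  have hx : R.actR (R.refl a) b = b - m • a := R.actR_refl ha b
  have hxreal : R.IsRealRoot (R.actR (R.refl a) b) := R.isRealRoot_act hb _
  have hreflx : R.refl (R.actR (R.refl a) b) = R.refl b := by
    rw [R.refl_act, R.refl_inv ha, mul_assoc, ← hcomm, ← mul_assoc,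
      R.refl_mul_self ha, one_mul]
  have hnegx := R.actR_refl_self hxreal
  rw [hreflx, hx] at hnegx
  rw [R.actR_sub, R.actR_zsmul, R.actR_refl_self hb, hfix] at hnegx
  -- hnegx : -b - m • a = -(b - m•a)
  by_contra hm
  have hane := R.ne_zero_of_isRealRoot ha
  obtain ⟨j, hj⟩ := Function.ne_iff.mp hane
  have hcoord := congrFun hnegx j
  simp only [Pi.sub_apply, Pi.neg_apply, Pi.smul_apply, smul_eq_mul,
    Pi.zero_apply] at hcoord hj
  have ht : m * a j = 0 := by linarith
  rcases mul_eq_zero.mp ht with h' | h'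
  · exact hm h'
  · exact hj h'

/-! ### ascent step -/

lemma actR_simple_simple (i : Fin (n + 1)) (a : AffLat n) :
    R.actR (R.cs.simple i) (R.actR (R.cs.simple i) a) = a := by
  rw [← R.actR_mul, R.cs.simple_mul_simple_self, R.actR_one]

lemma step_up {a : AffLat n} {i : Fin (n + 1)} (hp : R.IsPosRoot a)
    (hc : R.pairing (simpleVec i) (R.coroot a) ≤ -1) :
    R.IsPosRoot (R.actR (R.cs.simple i) a)
    ∧ R.coroot (R.actR (R.cs.simple i) a)
        = R.coroot a - R.pairing (simpleVec i) (R.coroot a) • simpleVec i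
    ∧ R.cs.length (R.refl (R.actR (R.cs.simple i) a)) = R.cs.length (R.refl a) + 2 := by
  set c := R.pairing (simpleVec i) (R.coroot a) with hcdef
  have hne : a ≠ simpleVec i := by
    intro h
    rw [h, R.coroot_simple, R.pairing_self_simple] at hcdef
    omega
  have hreal : R.IsRealRoot (R.actR (R.cs.simple i) a) := R.isRealRoot_act hp.1 _
  have hpos : 0 ≤ R.actR (R.cs.simple i) a := by
    rcases R.total hp (R.cs.simple i) with h0 | h0
    · exact h0
    · exfalso
      apply hne
      apply R.simple_of_support hp
      intro j hj
      have := h0 j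
      rw [R.actR_simple'] at this
      simp only [Pi.zero_apply, Pi.sub_apply, Pi.smul_apply, smul_eq_mul,
        simpleVec_ne hj, mul_zero, sub_zero] at this
      have h2 := hp.2 j
      simp only [Pi.zero_apply] at h2
      omega
  have hp' : R.IsPosRoot (R.actR (R.cs.simple i) a) := ⟨hreal, hpos⟩
  have hcor' : R.coroot (R.actR (R.cs.simple i) a) = R.coroot a - c • simpleVec i := by
    rw [R.coroot_act, R.actC_simple']
  have hne' : R.actR (R.cs.simple i) a ≠ simpleVec i := by
    intro h
    have ha : a = R.actR (R.cs.simple i) (simpleVec i) := by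
      rw [← h, R.actR_simple_simple]
    rw [R.actR_simple_self] at ha
    have := hp.2 i
    rw [ha] at this
    simp only [Pi.zero_apply, Pi.neg_apply, simpleVec_same] at this
    omega
  have hc' : 1 ≤ R.pairing (simpleVec i) (R.coroot (R.actR (R.cs.simple i) a)) := by
    rw [hcor', R.pairing_sub_right, R.pairing_smul_right, R.pairing_self_simple]
    omega
  obtain ⟨_, _, hlen⟩ := R.step_down hp' hne' hc'
  rw [R.actR_simple_simple] at hlen
  exact ⟨hp', hcor', by omega⟩

/-! ### positivity of coroots and the length upper bound -/

lemma coroot_nonneg_len_aux : ∀ N : ℕ, ∀ a : AffLat n, R.IsPosRoot a →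
    R.cs.length (R.refl a) = N →
    0 ≤ R.coroot a ∧ (R.cs.length (R.refl a) : ℤ) ≤ 2 * htv (R.coroot a) - 1 := by
  intro N
  induction N using Nat.strong_induction_on with
  | _ N IH =>
    intro a hp hN
    by_cases hs : ∃ i, a = simpleVec i
    · obtain ⟨i, rfl⟩ := hs
      rw [R.coroot_simple, R.refl_simple, R.cs.length_simple, htv_simpleVec]
      exact ⟨(R.isPosRoot_simple i).2, by omega⟩
    · push_neg at hs
      have hne1 : R.refl a ≠ 1 := by
        intro h
        have hodd := R.odd_length_refl hp.1
        rw [h, R.cs.length_one] at hodd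
        rcases hodd with ⟨k, hk⟩
        omega
      obtain ⟨i, hdesc⟩ := R.cs.exists_rightDescent_of_ne_one hne1
      have hlt : R.cs.length (R.refl a * R.cs.simple i) < R.cs.length (R.refl a) := hdesc
      have hneg : R.actR (R.refl a) (simpleVec i) ≤ 0 := by
        apply (R.length_refl_lt_iff (simpleVec i) (R.isRealRoot_simple i)
          (R.isPosRoot_simple i).2 (R.refl a)).mp
        rwa [R.refl_simple]
      set c := R.pairing (simpleVec i) (R.coroot a) with hcdef
      have hc : 1 ≤ c := by
        by_contra hcle
        push_neg at hcle
        have hi := hneg i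
        rw [R.actR_refl hp.1] at hi
        simp only [Pi.zero_apply, Pi.sub_apply, Pi.smul_apply, smul_eq_mul,
          simpleVec_same] at hi
        have h2 := hp.2 i
        simp only [Pi.zero_apply] at h2
        nlinarith
      obtain ⟨hp', hcor', hlen'⟩ := R.step_down hp (hs i) hc
      have hNlt : R.cs.length (R.refl (R.actR (R.cs.simple i) a)) < N := by omega
      obtain ⟨hnn', hbound'⟩ := IH _ hNlt _ hp' rfl
      have hcoreq : R.coroot a = R.coroot (R.actR (R.cs.simple i) a) + c • simpleVec i := by
        rw [hcor']
        abel
      constructor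
      · intro j
        rw [hcoreq]
        have h1 := hnn' j
        simp only [Pi.zero_apply, Pi.add_apply, Pi.smul_apply, smul_eq_mul] at h1 ⊢
        by_cases hj : j = i
        · subst hj
          rw [simpleVec_same]
          omega
        · rw [simpleVec_ne hj]
          omega
      · have hht : htv (R.coroot a) = htv (R.coroot (R.actR (R.cs.simple i) a)) + c := by
          rw [hcoreq, htv_add, htv_smul, htv_simpleVec]
          omega
        omega

lemma coroot_nonneg {a : AffLat n} (hp : R.IsPosRoot a) : 0 ≤ R.coroot a :=
  (R.coroot_nonneg_len_aux _ a hp rfl).1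

lemma length_refl_le {a : AffLat n} (hp : R.IsPosRoot a) :
    (R.cs.length (R.refl a) : ℤ) ≤ 2 * htv (R.coroot a) - 1 :=
  (R.coroot_nonneg_len_aux _ a hp rfl).2

lemma htv_coroot_ge_one {a : AffLat n} (hp : R.IsPosRoot a) : 1 ≤ htv (R.coroot a) := by
  obtain ⟨j, hj⟩ := exists_pos_coord (R.coroot_nonneg hp) (R.coroot_ne_zero hp.1)
  have h1 : R.coroot a j ≤ htv (R.coroot a) := by
    apply Finset.single_le_sum (f := fun k => R.coroot a k)
    · intro k _
      have := R.coroot_nonneg hp k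
      simpa using this
    · exact Finset.mem_univ j
  omega

/-! ### injectivity of the coroot map on positive roots -/

lemma isPosRoot_neg_of_nonpos {a : AffLat n} (h : R.IsRealRoot a) (hle : a ≤ 0) :
    R.IsPosRoot (-a) := by
  refine ⟨R.neg_isRealRoot h, ?_⟩
  intro j
  have := hle j
  simp only [Pi.zero_apply, Pi.neg_apply] at this ⊢
  omega

lemma pos_of_act {a : AffLat n} (hp : R.IsPosRoot a) (w : W)
    (hcor : 0 ≤ R.coroot (R.actR w a)) : 0 ≤ R.actR w a := by
  rcases R.total hp w with h | h
  · exact h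
  · exfalso
    have hneg := R.isPosRoot_neg_of_nonpos (R.isRealRoot_act hp.1 w) h
    have h2 := R.coroot_nonneg hneg
    rw [R.coroot_neg (R.isRealRoot_act hp.1 w)] at h2
    have hnz := R.coroot_ne_zero (R.isRealRoot_act hp.1 w)
    apply hnz
    funext j
    have ha := hcor j
    have hb := h2 j
    simp only [Pi.zero_apply, Pi.neg_apply] at ha hb ⊢
    omega

lemma coroot_inj_aux {x y : AffLat n} (hx : R.IsPosRoot x) (hy : R.IsPosRoot y)
    (h : R.coroot x = R.coroot y) : ∀ j, y j ≤ x j := by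
  have hpxd : R.pairing x (R.coroot x) = 2 := R.pairing_coroot_self hx.1
  have hpyd : R.pairing y (R.coroot x) = 2 := by
    rw [h]
    exact R.pairing_coroot_self hy.1
  set u := R.refl x * R.refl y with hu
  have hyx0 : R.pairing (y - x) (R.coroot x) = 0 := by
    rw [R.pairing_sub_left, hpyd, hpxd]
    omega
  have keyR : ∀ z, R.actR u z = z - R.pairing z (R.coroot x) • (y - x) := by
    intro z
    have e1 : R.actR (R.refl y) z = z - R.pairing z (R.coroot x) • y := by
      rw [R.actR_refl hy.1, h]
    have e2 : R.pairing (z - R.pairing z (R.coroot x) • y) (R.coroot x)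
        = -R.pairing z (R.coroot x) := by
      rw [R.pairing_sub_left, R.pairing_smul_left, hpyd]
      ring
    rw [hu, R.actR_mul, e1, R.actR_refl hx.1, e2, neg_smul, smul_sub]
    abel
  have keyC : R.actC u (R.coroot x) = R.coroot x := by
    have e1 : R.actC (R.refl y) (R.coroot x) = -R.coroot x := by
      rw [R.actC_refl hy.1, hpyd, ← h, two_smul]
      abel
    have e2 : R.pairing x (-R.coroot x) = -2 := by
      rw [R.pairing_neg_right, hpxd]
    rw [hu, R.actC_mul, e1, R.actC_refl hx.1, e2, neg_smul, two_smul]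
    abel
  have powR : ∀ N : ℕ, R.actR (u ^ N) x = x - ((2 * N : ℤ)) • (y - x)
      ∧ R.actC (u ^ N) (R.coroot x) = R.coroot x := by
    intro N
    induction N with
    | zero => simp [R.actR_one, R.actC_one]
    | succ N IHN =>
      obtain ⟨h1, h2⟩ := IHN
      constructor
      · rw [pow_succ', R.actR_mul, h1, keyR]
        have hz : R.pairing (x - (2 * (N:ℤ)) • (y - x)) (R.coroot x) = 2 := by
          rw [R.pairing_sub_left, R.pairing_smul_left, hpxd, hyx0]
          ring
        rw [hz]
        push_cast
        have h2s : (2 * ((N:ℤ) + 1)) • (y - x) = (2 * (N:ℤ)) • (y - x) + (2:ℤ) • (y - x) := by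
          rw [← add_smul]
          ring_nf
        rw [h2s]
        abel
      · rw [pow_succ, R.actC_mul, keyC, h2]
  have posN : ∀ N : ℕ, 0 ≤ x - ((2 * N : ℤ)) • (y - x) := by
    intro N
    obtain ⟨h1, h2⟩ := powR N
    rw [← h1]
    apply R.pos_of_act hx
    rw [R.coroot_act, h2]
    exact R.coroot_nonneg hx
  intro j
  by_contra hcon
  push_neg at hcon
  set t := y j - x j with htdef
  have ht1 : 1 ≤ t := by omega
  have hxj : 0 ≤ x j := by
    have := hx.2 j
    simpa using this
  have hthis := posN ((x j).toNat + 1) j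
  simp only [Pi.zero_apply, Pi.sub_apply, Pi.smul_apply, smul_eq_mul] at hthis
  have hcast : (((x j).toNat + 1 : ℕ) : ℤ) = x j + 1 := by
    push_cast
    rw [Int.toNat_of_nonneg hxj]
  rw [hcast] at hthis
  nlinarith [ht1, hxj, hthis]

lemma coroot_inj {x y : AffLat n} (hx : R.IsPosRoot x) (hy : R.IsPosRoot y)
    (h : R.coroot x = R.coroot y) : x = y := by
  funext j
  exact le_antisymm (R.coroot_inj_aux hy hx h.symm j) (R.coroot_inj_aux hx hy h j)

/-! ### direction I : if the pairing vanishes, γ is not a Chevalley root -/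

lemma not_chevalley_of_pairing_zero {a b g : AffLat n}
    (ha : R.IsChevalleyRoot a) (hb : R.IsChevalleyRoot b)
    (hlen : R.cs.length (R.refl a * R.refl b)
        = R.cs.length (R.refl a) + R.cs.length (R.refl b))
    (hg : R.IsPosRoot g) (hcor : R.coroot g = R.coroot a + R.coroot b)
    (hk : R.pairing a (R.coroot b) = 0) : ¬ R.IsChevalleyRoot g := by
  intro hqg
  have hm : R.pairing b (R.coroot a) = 0 := R.pairing_sym_zero ha.1.1 hb.1.1 hk
  have hpag : R.pairing a (R.coroot g) = 2 := by
    rw [hcor, R.pairing_add_right, R.pairing_coroot_self ha.1.1, hk]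
    omega
  have hpbg : R.pairing b (R.coroot g) = 2 := by
    rw [hcor, R.pairing_add_right, R.pairing_coroot_self hb.1.1, hm]
    omega
  have hdcor : R.coroot (R.actR (R.refl a) g) = R.coroot g - (2:ℤ) • R.coroot a := by
    rw [R.coroot_act, R.actC_refl ha.1.1, hpag]
  have hecor : R.coroot (R.actR (R.refl b) g) = R.coroot g - (2:ℤ) • R.coroot b := by
    rw [R.coroot_act, R.actC_refl hb.1.1, hpbg]
  -- the key length estimate
  have key : ∀ p : AffLat n, R.IsChevalleyRoot p → 0 ≤ R.actR (R.refl p) g →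
      R.coroot (R.actR (R.refl p) g) = R.coroot g - (2:ℤ) • R.coroot p → False := by
    intro p hp hpos hcor2
    have hppos : R.IsPosRoot (R.actR (R.refl p) g) := ⟨R.isRealRoot_act hg.1 _, hpos⟩
    have hlow := R.length_refl_le hppos
    have hhtd : htv (R.coroot (R.actR (R.refl p) g))
        = htv (R.coroot g) - 2 * htv (R.coroot p) := by
      rw [hcor2, htv_sub, htv_smul]
    have hreflδ : R.refl (R.actR (R.refl p) g) = R.refl p * R.refl g * R.refl p := by
      rw [R.refl_act, R.refl_inv hp.1.1]
    have hγexp : R.refl g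
        = R.refl p * R.refl (R.actR (R.refl p) g) * R.refl p := by
      rw [hreflδ]
      have h2 : R.refl p * (R.refl p * R.refl g * R.refl p) * R.refl p
          = (R.refl p * R.refl p) * R.refl g * (R.refl p * R.refl p) := by
        simp only [mul_assoc]
      rw [h2, R.refl_mul_self hp.1.1, one_mul, mul_one]
    have hlb1 : R.cs.length (R.refl g)
        ≤ R.cs.length (R.refl p) + R.cs.length (R.refl (R.actR (R.refl p) g))
          + R.cs.length (R.refl p) := by
      calc R.cs.length (R.refl g)
          = R.cs.length (R.refl p * R.refl (R.actR (R.refl p) g) * R.refl p) := by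
            rw [← hγexp]
        _ ≤ R.cs.length (R.refl p * R.refl (R.actR (R.refl p) g))
            + R.cs.length (R.refl p) := R.cs.length_mul_le _ _
        _ ≤ R.cs.length (R.refl p) + R.cs.length (R.refl (R.actR (R.refl p) g))
            + R.cs.length (R.refl p) := by
            have := R.cs.length_mul_le (R.refl p) (R.refl (R.actR (R.refl p) g))
            omega
    have hcast : (R.cs.length (R.refl g) : ℤ)
        ≤ (R.cs.length (R.refl p) : ℤ) + (R.cs.length (R.refl (R.actR (R.refl p) g)) : ℤ)
          + (R.cs.length (R.refl p) : ℤ) := by exact_mod_cast hlb1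
    have hpq := hp.2
    have hgq := hqg.2
    omega
  rcases R.total hg (R.refl a) with hda | hda
  · exact key a ha hda hdcor
  · rcases R.total hg (R.refl b) with hdb | hdb
    · exact key b hb hdb hecor
    · -- both negative: coroot a = coroot b, contradiction with additivity
      have hdreal : R.IsRealRoot (R.actR (R.refl a) g) := R.isRealRoot_act hg.1 _
      have hereal : R.IsRealRoot (R.actR (R.refl b) g) := R.isRealRoot_act hg.1 _
      have h1 := R.coroot_nonneg (R.isPosRoot_neg_of_nonpos hdreal hda)
      have h2 := R.coroot_nonneg (R.isPosRoot_neg_of_nonpos hereal hdb)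
      rw [R.coroot_neg hdreal, hdcor] at h1
      rw [R.coroot_neg hereal, hecor] at h2
      have hab : R.coroot a = R.coroot b := by
        funext j
        have e1 := h1 j
        have e2 := h2 j
        rw [hcor] at e1 e2
        simp only [Pi.zero_apply, Pi.neg_apply, Pi.sub_apply, Pi.add_apply,
          Pi.smul_apply, smul_eq_mul] at e1 e2
        omega
      have heq : a = b := R.coroot_inj ha.1 hb.1 hab
      rw [heq, R.refl_mul_self hb.1.1, R.cs.length_one] at hlen
      obtain ⟨k, hkodd⟩ := R.odd_length_refl hb.1.1
      omega

/-! ### direction II : preliminaries -/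

lemma no_common_descent {a b : AffLat n} (hpa : R.IsPosRoot a) (hpb : R.IsPosRoot b)
    (hlen : R.cs.length (R.refl a * R.refl b)
        = R.cs.length (R.refl a) + R.cs.length (R.refl b))
    (i : Fin (n + 1)) (hca : 1 ≤ R.pairing (simpleVec i) (R.coroot a))
    (hcb : 1 ≤ R.pairing (simpleVec i) (R.coroot b)) : False := by
  have da := R.descent_of_c hpa hca
  have db := R.descent_of_c hpb hcb
  have da' : R.cs.length (R.refl a * R.cs.simple i) + 1 = R.cs.length (R.refl a) := by
    rcases R.cs.length_mul_simple (R.refl a) i with h | h <;> omega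
  have db' : R.cs.length (R.refl b * R.cs.simple i) + 1 = R.cs.length (R.refl b) := by
    rcases R.cs.length_mul_simple (R.refl b) i with h | h <;> omega
  have hswap : R.cs.length (R.cs.simple i * R.refl b)
      = R.cs.length (R.refl b * R.cs.simple i) :=
    R.length_simple_mul_refl (R.refl_isReflection hpb.1) i
  have hexp : (R.refl a * R.cs.simple i) * (R.cs.simple i * R.refl b)
      = R.refl a * R.refl b := by
    rw [mul_assoc, ← mul_assoc (R.cs.simple i) (R.cs.simple i),
      R.cs.simple_mul_simple_self, one_mul]
  have hle : R.cs.length (R.refl a * R.refl b)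
      ≤ R.cs.length (R.refl a * R.cs.simple i)
        + R.cs.length (R.cs.simple i * R.refl b) := by
    rw [← hexp]
    exact R.cs.length_mul_le _ _
  omega

lemma simple_conj_conj (i : Fin (n + 1)) (x : W) :
    R.cs.simple i * (R.cs.simple i * x * R.cs.simple i) * R.cs.simple i = x := by
  have h1 : R.cs.simple i * (R.cs.simple i * x * R.cs.simple i) * R.cs.simple i
      = (R.cs.simple i * R.cs.simple i) * x * (R.cs.simple i * R.cs.simple i) := by
    simp only [mul_assoc]
  rw [h1, R.cs.simple_mul_simple_self, one_mul, mul_one]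

/-- descent of a Chevalley root -/
lemma chev_descent {a : AffLat n} {i : Fin (n + 1)} (hq : R.IsChevalleyRoot a)
    (hne : a ≠ simpleVec i) (hc : 1 ≤ R.pairing (simpleVec i) (R.coroot a)) :
    R.pairing (simpleVec i) (R.coroot a) = 1
    ∧ R.IsChevalleyRoot (R.actR (R.cs.simple i) a) := by
  obtain ⟨hp', hcor', hlen'⟩ := R.step_down hq.1 hne hc
  have hlow := R.length_refl_le hp'
  have hht' : htv (R.coroot (R.actR (R.cs.simple i) a))
      = htv (R.coroot a) - R.pairing (simpleVec i) (R.coroot a) := by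
    rw [hcor', htv_sub, htv_smul, htv_simpleVec, mul_one]
  have hqa := hq.2
  have hc1 : R.pairing (simpleVec i) (R.coroot a) = 1 := by omega
  exact ⟨hc1, hp', by omega⟩

/-! ### direction II : the main induction -/

lemma chevalley_of_pairing_ne_zero_aux : ∀ N : ℕ, ∀ a b g : AffLat n,
    R.IsChevalleyRoot a → R.IsChevalleyRoot b →
    R.cs.length (R.refl a * R.refl b)
        = R.cs.length (R.refl a) + R.cs.length (R.refl b) →
    R.IsPosRoot g → R.coroot g = R.coroot a + R.coroot b →
    R.pairing a (R.coroot b) ≠ 0 →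
    R.cs.length (R.refl a) + R.cs.length (R.refl b) ≤ N →
    R.IsChevalleyRoot g := by
  intro N
  induction N with
  | zero =>
    intro a b g ha _ _ _ _ _ hle
    have := R.length_refl_pos ha.1.1
    omega
  | succ N IH =>
    intro a b g ha hb hlen hg hcor hk hle
    have hgg : R.pairing g (R.coroot g) = 2 := R.pairing_coroot_self hg.1
    have hex : ∃ i, 1 ≤ R.pairing (simpleVec i) (R.coroot g) := by
      by_contra hcon
      push_neg at hcon
      have hsum : R.pairing g (R.coroot g)
          = ∑ k, g k * R.pairing (simpleVec k) (R.coroot g) :=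
        R.pairing_decomp_left g (R.coroot g)
      have hneg : R.pairing g (R.coroot g) ≤ 0 := by
        rw [hsum]
        apply Finset.sum_nonpos
        intro k _
        have h1 := hg.2 k
        simp only [Pi.zero_apply] at h1
        have h2 := hcon k
        nlinarith
      omega
    obtain ⟨i, hig⟩ := hex
    have hgne : g ≠ simpleVec i → True := fun _ => trivial
    -- the main (symmetric) step
    have step : ∀ aa bb : AffLat n, R.IsChevalleyRoot aa → R.IsChevalleyRoot bb →
        R.cs.length (R.refl aa * R.refl bb)
            = R.cs.length (R.refl aa) + R.cs.length (R.refl bb) →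
        R.coroot g = R.coroot aa + R.coroot bb →
        R.pairing aa (R.coroot bb) ≠ 0 →
        R.cs.length (R.refl aa) + R.cs.length (R.refl bb) ≤ N + 1 →
        1 ≤ R.pairing (simpleVec i) (R.coroot aa) →
        R.IsChevalleyRoot g := by
      intro aa bb haa hbb hlen2 hcor2 hk2 hle2 hca1
      have hgne : g ≠ simpleVec i := by
        intro hgs
        have h1 := R.htv_coroot_ge_one haa.1
        have h2 := R.htv_coroot_ge_one hbb.1
        have h3 : htv (R.coroot g) = htv (R.coroot aa) + htv (R.coroot bb) := by
          rw [hcor2, htv_add]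
        rw [hgs, R.coroot_simple, htv_simpleVec] at h3
        omega
      have hstar : ¬ (1 ≤ R.pairing (simpleVec i) (R.coroot bb)) := by
        intro hcb1
        exact R.no_common_descent haa.1 hbb.1 hlen2 i hca1 hcb1
      push_neg at hstar
      have hsumig : R.pairing (simpleVec i) (R.coroot g)
          = R.pairing (simpleVec i) (R.coroot aa)
            + R.pairing (simpleVec i) (R.coroot bb) := by
        rw [hcor2, R.pairing_add_right]
      by_cases hsa : aa = simpleVec i
      · -- `aa` is the simple root `α_i`
        have hca2 : R.pairing (simpleVec i) (R.coroot aa) = 2 := by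
          rw [hsa, R.coroot_simple, R.pairing_self_simple]
        have hkv : R.pairing aa (R.coroot bb) = R.pairing (simpleVec i) (R.coroot bb) := by
          rw [hsa]
        have hcb1 : R.pairing (simpleVec i) (R.coroot bb) = -1 := by
          have hne0 : R.pairing (simpleVec i) (R.coroot bb) ≠ 0 := by
            rw [← hkv]; exact hk2
          omega
        have hcg : R.pairing (simpleVec i) (R.coroot g) = 1 := by omega
        obtain ⟨hp', hcor', hlen'⟩ := R.step_down hg hgne hig
        have hcorb : R.coroot (R.actR (R.cs.simple i) g) = R.coroot bb := by
          rw [hcor', hcg, hcor2, hsa, R.coroot_simple, one_smul]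
          abel
        have hgb : R.actR (R.cs.simple i) g = bb := R.coroot_inj hp' hbb.1 hcorb
        refine ⟨hg, ?_⟩
        have hht : htv (R.coroot g) = htv (R.coroot bb) + 1 := by
          rw [hcor2, htv_add, hsa, R.coroot_simple, htv_simpleVec]
          omega
        have hlenb : R.cs.length (R.refl g) = R.cs.length (R.refl bb) + 2 := by
          rw [← hgb]
          omega
        have hqb := hbb.2
        rw [hlenb, hht]
        push_cast
        omega
      · -- `aa` is not simple: recurse
        obtain ⟨hca, hqa'⟩ := R.chev_descent haa hsa hca1
        obtain ⟨hpa', hcora', hlena'⟩ := R.step_down haa.1 hsa hca1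
        have hcb0 : R.pairing (simpleVec i) (R.coroot bb) = 0 := by omega
        have hbv : R.pairing bb (simpleVec i) = 0 := by
          have h0 := R.pairing_sym_zero (R.isRealRoot_simple i) hbb.1.1 hcb0
          rwa [R.coroot_simple] at h0
        have hbfix : R.actR (R.cs.simple i) bb = bb := by
          rw [R.actR_simple', hbv, zero_smul, sub_zero]
        have hcomm : R.cs.simple i * R.refl bb = R.refl bb * R.cs.simple i := by
          have hco := R.refl_act (R.cs.simple i) bb
          rw [hbfix, R.cs.inv_simple] at hco
          calc R.cs.simple i * R.refl bb
              = R.cs.simple i * (R.cs.simple i * R.refl bb * R.cs.simple i) := by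
                rw [← hco]
            _ = R.refl bb * R.cs.simple i := by
                rw [← mul_assoc, ← mul_assoc, R.cs.simple_mul_simple_self, one_mul]
        have hrefla' : R.refl (R.actR (R.cs.simple i) aa)
            = R.cs.simple i * R.refl aa * R.cs.simple i := by
          rw [R.refl_act, R.cs.inv_simple]
        have hexp : R.refl (R.actR (R.cs.simple i) aa) * R.refl bb
            = R.cs.simple i * (R.refl aa * R.refl bb) * R.cs.simple i := by
          rw [hrefla']
          calc R.cs.simple i * R.refl aa * R.cs.simple i * R.refl bb
              = R.cs.simple i * R.refl aa * (R.cs.simple i * R.refl bb) := by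
                rw [mul_assoc]
            _ = R.cs.simple i * R.refl aa * (R.refl bb * R.cs.simple i) := by rw [hcomm]
            _ = R.cs.simple i * (R.refl aa * R.refl bb) * R.cs.simple i := by
                simp only [mul_assoc]
        have hupper : R.cs.length (R.refl (R.actR (R.cs.simple i) aa) * R.refl bb)
            ≤ R.cs.length (R.refl (R.actR (R.cs.simple i) aa)) + R.cs.length (R.refl bb) :=
          R.cs.length_mul_le _ _
        have hlower : R.cs.length (R.refl aa * R.refl bb)
            ≤ R.cs.length (R.refl (R.actR (R.cs.simple i) aa) * R.refl bb) + 2 := by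
          have hsand : R.refl aa * R.refl bb
              = R.cs.simple i * (R.refl (R.actR (R.cs.simple i) aa) * R.refl bb)
                * R.cs.simple i := by
            rw [hexp, R.simple_conj_conj]
          rw [hsand]
          have l1 := R.cs.length_mul_le
            (R.cs.simple i * (R.refl (R.actR (R.cs.simple i) aa) * R.refl bb))
            (R.cs.simple i)
          have l2 := R.cs.length_mul_le (R.cs.simple i)
            (R.refl (R.actR (R.cs.simple i) aa) * R.refl bb)
          have l3 := R.cs.length_simple i
          omega
        have hlen'' : R.cs.length (R.refl (R.actR (R.cs.simple i) aa) * R.refl bb)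
            = R.cs.length (R.refl (R.actR (R.cs.simple i) aa)) + R.cs.length (R.refl bb) := by
          omega
        have hk' : R.pairing (R.actR (R.cs.simple i) aa) (R.coroot bb) ≠ 0 := by
          rw [R.actR_simple', R.pairing_sub_left, R.pairing_smul_left, hcb0, mul_zero,
            sub_zero]
          exact hk2
        have hcg : R.pairing (simpleVec i) (R.coroot g) = 1 := by omega
        obtain ⟨hpg', hcorg', hleng'⟩ := R.step_down hg hgne hig
        have hcorg'' : R.coroot (R.actR (R.cs.simple i) g)
            = R.coroot (R.actR (R.cs.simple i) aa) + R.coroot bb := by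
          rw [hcorg', hcg, hcora', hca, hcor2]
          abel
        have hquantg' := IH (R.actR (R.cs.simple i) aa) bb (R.actR (R.cs.simple i) g)
          hqa' hbb hlen'' hpg' hcorg'' hk' (by omega)
        refine ⟨hg, ?_⟩
        have hq2 := hquantg'.2
        have hht : htv (R.coroot (R.actR (R.cs.simple i) g)) = htv (R.coroot g) - 1 := by
          rw [hcorg', hcg, htv_sub, htv_smul, htv_simpleVec]
          omega
        omega
    have hsplit : 1 ≤ R.pairing (simpleVec i) (R.coroot a)
        ∨ 1 ≤ R.pairing (simpleVec i) (R.coroot b) := by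
      have hsum : R.pairing (simpleVec i) (R.coroot g)
          = R.pairing (simpleVec i) (R.coroot a)
            + R.pairing (simpleVec i) (R.coroot b) := by
        rw [hcor, R.pairing_add_right]
      omega
    rcases hsplit with hA | hB
    · exact step a b ha hb hlen hcor hk hle hA
    · have hlen2 : R.cs.length (R.refl b * R.refl a)
          = R.cs.length (R.refl b) + R.cs.length (R.refl a) := by
        have h1 := R.cs.length_inv (R.refl b * R.refl a)
        rw [mul_inv_rev, R.refl_inv hb.1.1, R.refl_inv ha.1.1] at h1
        omega
      have hcor2 : R.coroot g = R.coroot b + R.coroot a := by rw [hcor]; abel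
      have hk2 : R.pairing b (R.coroot a) ≠ 0 :=
        fun h0 => hk (R.pairing_sym_zero hb.1.1 ha.1.1 h0)
      exact step b a hb ha hlen2 hcor2 hk2 (by omega) hB

end AffineRootSystem
/-- Let `α, β` be positive real affine roots with
`ℓ(s_α) = 2 ht(α∨) - 1`, `ℓ(s_β) = 2 ht(β∨) - 1` and
`ℓ(s_α s_β) = ℓ(s_α) + ℓ(s_β)`, and let `γ` be a positive real root with
`γ∨ = α∨ + β∨`.  Then `ℓ(s_γ) = 2 ht(γ∨) - 1` if and only if `⟨α, β∨⟩ ≠ 0`. -/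
theorem chevalley_sum_iff_pairing_ne_zero {n : ℕ} {W : Type*} [Group W]
    (R : AffineRootSystem n W) (a b g : AffLat n)
    (ha : R.IsChevalleyRoot a) (hb : R.IsChevalleyRoot b)
    (hlen : R.cs.length (R.refl a * R.refl b)
        = R.cs.length (R.refl a) + R.cs.length (R.refl b))
    (hg : R.IsPosRoot g) (hcor : R.coroot g = R.coroot a + R.coroot b) :
    R.IsChevalleyRoot g ↔ R.pairing a (R.coroot b) ≠ 0 := by
  constructor
  · intro hq hk0
    exact R.not_chevalley_of_pairing_zero ha hb hlen hg hcor hk0 hq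
  · intro hk
    exact R.chevalley_of_pairing_ne_zero_aux
      (R.cs.length (R.refl a) + R.cs.length (R.refl b)) a b g
      ha hb hlen hg hcor hk le_rfl
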